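/- Let φ = (1+√5)/2 and λ = √φ. For α in the interval [arccos(1/√φ), arcsin(1/√φ)], define A₁(α) = (1 - λ cos α)/sin α and A₂(α) = (1 - λ sin α)/cos α. Then A₁ is strictly increasing and A₂ is strictly decreasing on this interval, and the maximum value of each (attained at the respective endpoint) equals √φ - 1. -/

import Mathlib

open Real Set

theorem A1_mono_A2_anti :
    let φ : ℝ := (1 + Real.sqrt 5) / 2
    let lam : ℝ := Real.sqrt φ
    let I : Set ℝ := Set.Icc (Real.arccos (1 / Real.sqrt φ)) (Real.arcsin (1 / Real.sqrt φ))
    StrictMonoOn (fun α => (1 - lam * Real.cos α) / Real.sin α) I ∧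
    StrictAntiOn (fun α => (1 - lam * Real.sin α) / Real.cos α) I ∧
    (1 - lam * Real.cos (Real.arcsin (1 / Real.sqrt φ))) /
        Real.sin (Real.arcsin (1 / Real.sqrt φ)) = Real.sqrt φ - 1 ∧
    (1 - lam * Real.sin (Real.arccos (1 / Real.sqrt φ))) /
        Real.cos (Real.arccos (1 / Real.sqrt φ)) = Real.sqrt φ - 1 := by
  intro φ lam I
  have h5 : (1:ℝ) < Real.sqrt 5 := by
    nlinarith [Real.sq_sqrt (by norm_num : (0:ℝ) ≤ 5), Real.sqrt_nonneg 5]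
  have hφ1 : (1:ℝ) < φ := by simp only [φ]; linarith
  have hφ0 : (0:ℝ) < φ := by linarith
  have hlamsq : lam * lam = φ := Real.mul_self_sqrt hφ0.le
  have hlam0 : 0 < lam := Real.sqrt_pos.mpr hφ0
  have hlam1 : 1 < lam := by nlinarith
  set c : ℝ := 1 / Real.sqrt φ with hc
  have hc0 : 0 < c := by positivity
  have hc1 : c < 1 := by
    rw [hc, div_lt_one hlam0]; exact hlam1
  have hφsq : φ * φ = φ + 1 := by
    simp only [φ]; nlinarith [Real.sq_sqrt (by norm_num : (0:ℝ) ≤ 5)]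
  have hcsq : 1 - c ^ 2 = (1 / φ) ^ 2 := by
    have : c ^ 2 = 1 / φ := by
      rw [hc]; field_simp; rw [Real.sq_sqrt hφ0.le]
    rw [this]; field_simp; nlinarith [hφsq]
  have hsqrt1c : Real.sqrt (1 - c ^ 2) = 1 / φ := by
    rw [hcsq, Real.sqrt_sq (by positivity)]
  -- endpoint facts
  have hsin_arcsin : Real.sin (Real.arcsin c) = c :=
    Real.sin_arcsin (by linarith) hc1.le
  have hcos_arccos : Real.cos (Real.arccos c) = c :=
    Real.cos_arccos (by linarith) hc1.le
  have hcos_arcsin : Real.cos (Real.arcsin c) = 1 / φ := by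
    rw [Real.cos_arcsin, hsqrt1c]
  have hsin_arccos : Real.sin (Real.arccos c) = 1 / φ := by
    rw [Real.sin_arccos, hsqrt1c]
  have hval1 : (1 - lam * Real.cos (Real.arcsin c)) / Real.sin (Real.arcsin c)
      = Real.sqrt φ - 1 := by
    rw [hcos_arcsin, hsin_arcsin, hc]
    have h1 : Real.sqrt φ ≠ 0 := by positivity
    field_simp
    nlinarith
  have hval2 : (1 - lam * Real.sin (Real.arccos c)) / Real.cos (Real.arccos c)
      = Real.sqrt φ - 1 := by
    rw [hsin_arccos, hcos_arccos, hc]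
    field_simp
    nlinarith
  -- interval bounds
  have ha0 : 0 < Real.arccos c := Real.arccos_pos.mpr hc1
  have hb : Real.arcsin c < π / 2 := Real.arcsin_lt_pi_div_two.mpr hc1
  have hIsub : ∀ x ∈ I, 0 < x ∧ x < π / 2 := by
    intro x hx
    exact ⟨lt_of_lt_of_le ha0 hx.1, lt_of_le_of_lt hx.2 hb⟩
  have hsinpos : ∀ x ∈ I, 0 < Real.sin x := by
    intro x hx
    obtain ⟨h1, h2⟩ := hIsub x hx
    exact Real.sin_pos_of_pos_of_lt_pi h1 (h2.trans (by linarith [Real.pi_pos]))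
  have hcospos : ∀ x ∈ I, 0 < Real.cos x := by
    intro x hx
    obtain ⟨h1, h2⟩ := hIsub x hx
    exact Real.cos_pos_of_mem_Ioo ⟨by linarith [Real.pi_pos], h2⟩
  have hIconv : Convex ℝ I := convex_Icc _ _
  have hintI : interior I ⊆ I := interior_subset
  -- monotonicity of A1
  have hmono : StrictMonoOn (fun α => (1 - lam * Real.cos α) / Real.sin α) I := by
    apply strictMonoOn_of_deriv_pos hIconv
    · apply ContinuousOn.div
      · fun_prop
      · fun_prop
      · intro x hx; exact (hsinpos x hx).ne'
    · intro x hx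
      have hxI : x ∈ I := hintI hx
      have hs := hsinpos x hxI
      have hcos := Real.cos_le_one x
      have hd : HasDerivAt (fun α => (1 - lam * Real.cos α) / Real.sin α)
          (((0 - lam * (-Real.sin x)) * Real.sin x - (1 - lam * Real.cos x) * Real.cos x)
            / Real.sin x ^ 2) x := by
        exact ((hasDerivAt_const x (1:ℝ)).sub ((Real.hasDerivAt_cos x).const_mul lam)).div
          (Real.hasDerivAt_sin x) hs.ne'
      rw [hd.deriv]
      have key : (0 - lam * (-Real.sin x)) * Real.sin x - (1 - lam * Real.cos x) * Real.cos x
          = lam - Real.cos x := by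
        linear_combination lam * (Real.sin_sq_add_cos_sq x)
      rw [key]
      apply div_pos (by linarith) (by positivity)
  have hanti : StrictAntiOn (fun α => (1 - lam * Real.sin α) / Real.cos α) I := by
    apply strictAntiOn_of_deriv_neg hIconv
    · apply ContinuousOn.div
      · fun_prop
      · fun_prop
      · intro x hx; exact (hcospos x hx).ne'
    · intro x hx
      have hxI : x ∈ I := hintI hx
      have hcp := hcospos x hxI
      have hsin := Real.sin_le_one x
      have hd : HasDerivAt (fun α => (1 - lam * Real.sin α) / Real.cos α)
          (((0 - lam * Real.cos x) * Real.cos x - (1 - lam * Real.sin x) * (-Real.sin x))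
            / Real.cos x ^ 2) x := by
        exact ((hasDerivAt_const x (1:ℝ)).sub ((Real.hasDerivAt_sin x).const_mul lam)).div
          (Real.hasDerivAt_cos x) hcp.ne'
      rw [hd.deriv]
      have key : (0 - lam * Real.cos x) * Real.cos x - (1 - lam * Real.sin x) * (-Real.sin x)
          = Real.sin x - lam := by
        linear_combination (-lam) * (Real.sin_sq_add_cos_sq x)
      rw [key]
      apply div_neg_of_neg_of_pos (by linarith) (by positivity)
  exact ⟨hmono, hanti, hval1, hval2⟩
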